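/- Let p ≥ 3 be a prime and x_0, x_1 ∈ 𝔽_p. Then max(x_0, x_1) = (x_1 − x_0) · Σ_{d=2}^{p−2} d^{−1} (x_0 + 1)(x_0 + 2)⋯(x_0 + d) · x_1 (x_1 − 1)⋯(x_1 − (p − d) + 1) + x_0 + (x_0 + 1)^2 (1 − (x_1 + 1)^{p−1}) + (1 − x_0^{p−1}) x_1^2 in 𝔽_p, where d^{−1} is the inverse of d in 𝔽_p. -/

import Mathlib

section helpers

private lemma max2_master (a : ℕ) : ∀ b n : ℕ,
    ∑ d ∈ Finset.range (n+1), (-1:ℤ)^d * ((a+d).choose d) * (b.choose (n-d)) =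
      if b ≤ a then (-1:ℤ)^n * ((n + a - b).choose n : ℤ) else ((b - a - 1).choose n : ℤ) := by
  intro b
  induction b with
  | zero =>
    intro n
    rw [if_pos (Nat.zero_le a)]
    rw [Finset.sum_eq_single n]
    · rw [Nat.add_comm a n]; simp
    · intro d hd hne
      have hd' : d < n + 1 := Finset.mem_range.mp hd
      rw [Nat.choose_eq_zero_of_lt (show 0 < n - d by omega)]
      ring
    · intro h; exact absurd (Finset.self_mem_range_succ n) h
  | succ b ih =>
    intro n
    cases n with
    | zero => simp
    | succ n =>
      have key : ∀ d ∈ Finset.range (n+2),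
          (-1:ℤ)^d * ((a+d).choose d) * ((b+1).choose (n+1-d)) =
          (-1:ℤ)^d * ((a+d).choose d) * (b.choose (n+1-d)) +
          (if d ≤ n then (-1:ℤ)^d * ((a+d).choose d) * (b.choose (n-d)) else 0) := by
        intro d hd
        by_cases h : d ≤ n
        · rw [if_pos h]
          have h1 : n + 1 - d = (n - d) + 1 := by omega
          rw [h1, Nat.choose_succ_succ']
          push_cast
          ring
        · rw [if_neg h]
          have hd2 : d = n + 1 := by have := Finset.mem_range.mp hd; omega
          subst hd2
          simp
      rw [Finset.sum_congr rfl key, Finset.sum_add_distrib]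
      have h2 : ∑ d ∈ Finset.range (n+2),
          (if d ≤ n then (-1:ℤ)^d * ((a+d).choose d) * (b.choose (n-d)) else 0) =
          ∑ d ∈ Finset.range (n+1), (-1:ℤ)^d * ((a+d).choose d) * (b.choose (n-d)) := by
        rw [Finset.sum_range_succ, if_neg (by omega)]
        rw [add_zero]
        apply Finset.sum_congr rfl
        intro d hd
        rw [if_pos (by have := Finset.mem_range.mp hd; omega)]
      rw [h2, ih (n+1), ih n]
      by_cases hba : b + 1 ≤ a
      · rw [if_pos hba, if_pos (by omega), if_pos (by omega)]
        have e1 : n + 1 + a - b = (n + a - b) + 1 := by omega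
        have e2 : n + 1 + a - (b + 1) = n + a - b := by omega
        rw [e1, e2, Nat.choose_succ_succ']
        push_cast
        ring
      · by_cases hba2 : b ≤ a
        · have hb : b = a := by omega
          subst hb
          rw [if_neg hba, if_pos le_rfl, if_pos le_rfl]
          have e1 : n + 1 + b - b = n + 1 := by omega
          have e2 : n + b - b = n := by omega
          rw [e1, e2]
          simp [pow_succ]
        · rw [if_neg hba, if_neg hba2, if_neg hba2]
          have e1 : b + 1 - a - 1 = (b - a - 1) + 1 := by omega
          rw [e1, Nat.choose_succ_succ']
          push_cast
          ring

private lemma max2_prod_int_desc (b k : ℕ) :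
    ∏ j ∈ Finset.range k, ((b:ℤ) - j) = (b.descFactorial k : ℤ) := by
  induction k with
  | zero => simp
  | succ k ih =>
    rw [Finset.prod_range_succ, ih, Nat.descFactorial_succ]
    by_cases h : k ≤ b
    · push_cast [h]; ring
    · rw [Nat.descFactorial_eq_zero_iff_lt.mpr (by omega)]
      simp

private lemma max2_prod_asc (a : ℕ) :
    ∀ d : ℕ, ∏ j ∈ Finset.Icc 1 d, (a + j) = d.factorial * (a+d).choose d
  | 0 => by simp
  | d + 1 => by
    rw [← Finset.Ico_add_one_right_eq_Icc, Finset.prod_Ico_succ_top (by omega), Finset.Ico_add_one_right_eq_Icc,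
      max2_prod_asc a d]
    have h := Nat.add_one_mul_choose_eq (a + d) d
    have hs : a + d + 1 = a + (d+1) := by omega
    rw [hs] at h
    calc d.factorial * (a + d).choose d * (a + (d+1))
        = d.factorial * ((a + (d+1)) * (a+d).choose d) := by ring
    _ = d.factorial * ((a + (d+1)).choose (d+1) * (d+1)) := by rw [h]
    _ = (d+1).factorial * (a + (d+1)).choose (d+1) := by rw [Nat.factorial_succ]; ring

private lemma max2_wilson_split (p : ℕ) [Fact p.Prime] (hodd : Odd p) (d : ℕ)
    (h1 : 1 ≤ d) (h2 : d < p) :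
    ((d-1).factorial : ZMod p) * ((p-d).factorial : ZMod p) = (-1)^d := by
  have hn : (d-1).factorial * Nat.descFactorial (p-1) (p-d) = (p-1).factorial := by
    rw [Nat.descFactorial_eq_factorial_mul_choose]
    have h3 : p - d ≤ p - 1 := by omega
    have hc := Nat.choose_mul_factorial_mul_factorial h3
    have e : p - 1 - (p - d) = d - 1 := by omega
    rw [e] at hc
    calc (d-1).factorial * ((p-d).factorial * (p-1).choose (p-d))
        = (p-1).choose (p-d) * (p-d).factorial * (d-1).factorial := by ring
    _ = (p-1).factorial := hc
  have hz : ((d-1).factorial : ZMod p) * ((-1)^(p-d) * ((p-d).factorial : ZMod p)) = -1 := by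
    rw [← ZMod.cast_descFactorial (show p - d ≤ p by omega), ← Nat.cast_mul, hn,
      ZMod.wilsons_lemma]
  have hsq : ((-1 : ZMod p)^(p-d)) * ((-1 : ZMod p)^(p-d)) = 1 := by
    rw [← pow_add]
    exact Even.neg_one_pow ⟨p - d, rfl⟩
  have key : ((d-1).factorial : ZMod p) * ((p-d).factorial : ZMod p) = -(-1:ZMod p)^(p-d) := by
    calc ((d-1).factorial : ZMod p) * ((p-d).factorial : ZMod p)
        = ((-1 : ZMod p)^(p-d) * (-1 : ZMod p)^(p-d)) *
          (((d-1).factorial : ZMod p) * ((p-d).factorial : ZMod p)) := by rw [hsq, one_mul]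
    _ = (-1 : ZMod p)^(p-d) *
          (((d-1).factorial : ZMod p) * ((-1)^(p-d) * ((p-d).factorial : ZMod p))) := by ring
    _ = (-1 : ZMod p)^(p-d) * (-1) := by rw [hz]
    _ = -(-1:ZMod p)^(p-d) := by ring
  rw [key]
  rcases Nat.even_or_odd d with hd | hd
  · have : Odd (p - d) := Nat.Odd.sub_even (by omega) hodd hd
    rw [Odd.neg_one_pow this, Even.neg_one_pow hd]
    ring
  · have : Even (p - d) := Nat.Odd.sub_odd hodd hd
    rw [Even.neg_one_pow this, Odd.neg_one_pow hd]

private lemma max2_lucas1 (p a : ℕ) [hp : Fact p.Prime] (h : a < p) :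
    (((a+p).choose p : ℕ) : ZMod p) = 1 := by
  have hmod := Choose.choose_modEq_choose_mod_mul_choose_div_nat (n := a + p) (k := p) (p := p)
  have hp0 : 0 < p := hp.out.pos
  have e1 : (a + p) % p = a := by rw [Nat.add_mod_right, Nat.mod_eq_of_lt h]
  have e2 : (a + p) / p = 1 := by rw [Nat.add_div_right _ hp0, Nat.div_eq_of_lt h]
  rw [e1, e2, Nat.mod_self, Nat.div_self hp0] at hmod
  have := (ZMod.natCast_eq_natCast_iff _ _ _).mpr hmod
  simpa using this

private lemma max2_lucas2 (p a : ℕ) [hp : Fact p.Prime] (h1 : 1 ≤ a) (h : a < p) :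
    (((a+p-1).choose (p-1) : ℕ) : ZMod p) = 0 := by
  have hmod := Choose.choose_modEq_choose_mod_mul_choose_div_nat
    (n := a + p - 1) (k := p - 1) (p := p)
  have hp0 : 0 < p := hp.out.pos
  have e0 : a + p - 1 = (a - 1) + p := by omega
  have e1 : (a + p - 1) % p = a - 1 := by rw [e0, Nat.add_mod_right, Nat.mod_eq_of_lt (by omega)]
  have e2 : (a + p - 1) / p = 1 := by rw [e0, Nat.add_div_right _ hp0, Nat.div_eq_of_lt (by omega)]
  have e3 : (p - 1) % p = p - 1 := Nat.mod_eq_of_lt (by omega)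
  have e4 : (p - 1) / p = 0 := Nat.div_eq_of_lt (by omega)
  rw [e1, e2, e3, e4] at hmod
  rw [Nat.choose_eq_zero_of_lt (show a - 1 < p - 1 by omega)] at hmod
  have := (ZMod.natCast_eq_natCast_iff _ _ _).mpr hmod
  simpa using this

private lemma max2_term_eq (p : ℕ) [hp : Fact p.Prime] (hp3 : 3 ≤ p) (a b : ℕ) (d : ℕ)
    (hd2 : 2 ≤ d) (hdp : d ≤ p - 2) :
    ((d : ZMod p))⁻¹ * (∏ j ∈ Finset.Icc 1 d, ((a : ZMod p) + (j : ZMod p))) *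
      ∏ j ∈ Finset.range (p - d), ((b : ZMod p) - (j : ZMod p)) =
    (((-1:ℤ)^d * ((a+d).choose d : ℤ) * (b.choose (p-d) : ℤ) : ℤ) : ZMod p) := by
  have hodd : Odd p := hp.out.odd_of_ne_two (by omega)
  have h1 : (∏ j ∈ Finset.Icc 1 d, ((a : ZMod p) + (j : ZMod p))) =
      ((d.factorial : ZMod p) * ((a+d).choose d : ZMod p)) := by
    rw [← Nat.cast_mul, ← max2_prod_asc a d]
    push_cast
    rfl
  have h2 : (∏ j ∈ Finset.range (p - d), ((b : ZMod p) - (j : ZMod p))) =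
      (((p-d).factorial : ZMod p) * ((b.choose (p-d) : ZMod p))) := by
    have hcast : ((∏ j ∈ Finset.range (p-d), ((b:ℤ) - j) : ℤ) : ZMod p) =
        ∏ j ∈ Finset.range (p - d), ((b : ZMod p) - (j : ZMod p)) := by
      push_cast
      rfl
    rw [← hcast, max2_prod_int_desc, Nat.descFactorial_eq_factorial_mul_choose]
    push_cast
    ring
  have hdne : (d : ZMod p) ≠ 0 := by
    intro hc
    rw [ZMod.natCast_eq_zero_iff] at hc
    have := Nat.le_of_dvd (by omega) hc
    omega
  have hfac : (d.factorial : ZMod p) = (d : ZMod p) * ((d-1).factorial : ZMod p) := by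
    have hd : d.factorial = d * (d-1).factorial := by
      conv_lhs => rw [show d = (d-1) + 1 by omega]
      rw [Nat.factorial_succ]
      congr 1
      omega
    rw [hd]
    push_cast
    ring
  rw [h1, h2, hfac]
  push_cast
  calc (d : ZMod p)⁻¹ * ((d : ZMod p) * ((d-1).factorial : ZMod p) * ((a+d).choose d : ZMod p)) *
        (((p-d).factorial : ZMod p) * (b.choose (p-d) : ZMod p))
      = ((d : ZMod p)⁻¹ * (d : ZMod p)) * (((d-1).factorial : ZMod p) * ((p-d).factorial : ZMod p)) *
        (((a+d).choose d : ZMod p) * (b.choose (p-d) : ZMod p)) := by ring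
    _ = (-1:ZMod p)^d * (((a+d).choose d : ZMod p) * (b.choose (p-d) : ZMod p)) := by
        rw [inv_mul_cancel₀ hdne, max2_wilson_split p hodd d (by omega) (by omega), one_mul]
    _ = (-1:ZMod p)^d * ((a+d).choose d : ZMod p) * (b.choose (p-d) : ZMod p) := by ring

private lemma max2_sum_eval (p : ℕ) [hp : Fact p.Prime] (hp3 : 3 ≤ p) (a b : ℕ)
    (ha : a < p) (hb : b < p) :
    ((∑ d ∈ Finset.Icc 2 (p-2),
        ((-1:ℤ)^d * ((a+d).choose d : ℤ) * (b.choose (p-d) : ℤ)) : ℤ) : ZMod p) =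
    (if b ≤ a then (-1:ZMod p) else 0) + 1 + (if b = p-1 then ((a:ZMod p)+1) else 0)
      - (if a = 0 then (b:ZMod p) else 0) := by
  have hodd : Odd p := hp.out.odd_of_ne_two (by omega)
  set f : ℕ → ℤ := fun d => (-1:ℤ)^d * ((a+d).choose d : ℤ) * (b.choose (p-d) : ℤ) with hf
  have e1 : Finset.Icc 2 (p-2) = Finset.Ico 2 (p-1) := by
    rw [show p-1 = (p-2)+1 by omega, Finset.Ico_add_one_right_eq_Icc]
  have split1 : ∑ d ∈ Finset.Ico 0 2, f d + ∑ d ∈ Finset.Ico 2 (p+1), f d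
      = ∑ d ∈ Finset.range (p+1), f d := by
    rw [Finset.range_eq_Ico]
    exact Finset.sum_Ico_consecutive f (by omega) (by omega)
  have split2 : ∑ d ∈ Finset.Ico 2 (p-1), f d + ∑ d ∈ Finset.Ico (p-1) (p+1), f d
      = ∑ d ∈ Finset.Ico 2 (p+1), f d :=
    Finset.sum_Ico_consecutive f (by omega) (by omega)
  have e2 : ∑ d ∈ Finset.Ico 0 2, f d = f 0 + f 1 := by
    rw [← Finset.range_eq_Ico]
    rw [Finset.sum_range_succ, Finset.sum_range_one]
  have e3 : ∑ d ∈ Finset.Ico (p-1) (p+1), f d = f (p-1) + f p := by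
    rw [show p+1 = (p-1)+1+1 by omega, Finset.sum_Ico_succ_top (by omega),
      Finset.sum_Ico_succ_top (by omega), Finset.Ico_self, Finset.sum_empty, zero_add,
      show p-1+1 = p by omega]
  have key : ∑ d ∈ Finset.Icc 2 (p-2), f d
      = ∑ d ∈ Finset.range (p+1), f d - f 0 - f 1 - f (p-1) - f p := by
    rw [e1, ← split1, ← split2, e2, e3]; ring
  rw [key, max2_master a b p]
  have hf0 : f 0 = 0 := by
    simp only [hf]
    rw [Nat.sub_zero, Nat.choose_eq_zero_of_lt hb]
    simp
  have hf1 : f 1 = -((a:ℤ)+1) * (if b = p-1 then 1 else 0) := by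
    simp only [hf]
    rw [Nat.choose_one_right]
    by_cases hbp : b = p - 1
    · rw [if_pos hbp, hbp, Nat.choose_self]
      push_cast
      ring
    · rw [if_neg hbp, Nat.choose_eq_zero_of_lt (show b < p - 1 by omega)]
      push_cast
      ring
  have hfp1 : ((f (p-1) : ℤ) : ZMod p) = if a = 0 then (b : ZMod p) else 0 := by
    simp only [hf]
    rw [show p - (p-1) = 1 by omega, Nat.choose_one_right]
    have hev : ((-1:ℤ)^(p-1) : ℤ) = 1 := Even.neg_one_pow (Nat.Odd.sub_odd hodd odd_one)
    rw [hev, one_mul]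
    by_cases ha0 : a = 0
    · rw [if_pos ha0, ha0]
      simp
    · rw [if_neg ha0]
      push_cast
      rw [show ((a + (p-1)).choose (p-1) : ZMod p) = (((a + p - 1).choose (p-1) : ℕ) : ZMod p)
          by rw [show a + (p-1) = a + p - 1 by omega]]
      rw [max2_lucas2 p a (by omega) ha]
      ring
  have hfp : ((f p : ℤ) : ZMod p) = -1 := by
    simp only [hf]
    rw [Nat.sub_self, Nat.choose_zero_right]
    push_cast
    rw [show ((a + p).choose p : ZMod p) = (((a+p).choose p : ℕ) : ZMod p) from rfl]
    rw [max2_lucas1 p a ha, Odd.neg_one_pow hodd]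
    ring
  have hmain : (((if b ≤ a then (-1:ℤ)^p * ((p + a - b).choose p : ℤ)
        else ((b - a - 1).choose p : ℤ)) : ℤ) : ZMod p)
      = if b ≤ a then (-1:ZMod p) else 0 := by
    by_cases hba : b ≤ a
    · rw [if_pos hba, if_pos hba]
      push_cast
      rw [show ((p + a - b).choose p : ZMod p) = (((a - b + p).choose p : ℕ) : ZMod p)
          by rw [show p + a - b = a - b + p by omega]]
      rw [max2_lucas1 p (a-b) (by omega), Odd.neg_one_pow hodd]
      ring
    · rw [if_neg hba, if_neg hba]
      rw [Nat.choose_eq_zero_of_lt (show b - a - 1 < p by omega)]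
      simp
  push_cast only [Int.cast_sub]
  rw [hmain, hfp1, hfp, hf0, hf1]
  by_cases hbp : b = p - 1 <;> by_cases ha0 : a = 0 <;>
    simp only [if_pos, if_neg, hbp, ha0] <;> push_cast <;> ring

end helpers

/-- The maximum of the components of `x`, where elements of `ZMod p` are
compared via their canonical natural-number representatives. -/
def fmax {p n : ℕ} (x : Fin n → ZMod p) : ZMod p :=
  ((Finset.univ.sup fun i => (x i).val : ℕ) : ZMod p)

/-- The least index `i` with `x i = fmax x`, as a natural number. -/
noncomputable def argmaxN {p n : ℕ} (x : Fin n → ZMod p) : ℕ :=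
  sInf {i : ℕ | ∃ h : i < n, x ⟨i, h⟩ = fmax x}

/-- The `r`-th digit of the base-`p` expansion of `k`, as an element of `ZMod p`. -/
def digitP (p k r : ℕ) : ZMod p := (((k / p ^ r) % p : ℕ) : ZMod p)

/-- Polynomial expression of the low-pass function `χ(z < t)`. -/
def Lp (p t : ℕ) (z : ZMod p) : ZMod p :=
  ∑ k ∈ Finset.range t, (1 - (z - (k : ZMod p)) ^ (p - 1))

/-- Polynomial expression of the Kronecker delta `χ(z = t)`. -/
def deltaP (p t : ℕ) (z : ZMod p) : ZMod p := 1 - (z - (t : ZMod p)) ^ (p - 1)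

theorem max_two_variables (p : ℕ) (hp : p.Prime) (hp3 : 3 ≤ p) (x0 x1 : ZMod p) :
    fmax ![x0, x1] =
      (x1 - x0) *
          (∑ d ∈ Finset.Icc 2 (p - 2),
            (d : ZMod p)⁻¹ * (∏ j ∈ Finset.Icc 1 d, (x0 + (j : ZMod p))) *
              ∏ j ∈ Finset.range (p - d), (x1 - (j : ZMod p))) +
        x0 + (x0 + 1) ^ 2 * (1 - (x1 + 1) ^ (p - 1)) + (1 - x0 ^ (p - 1)) * x1 ^ 2 := by
  haveI : Fact p.Prime := ⟨hp⟩
  haveI : NeZero p := ⟨by omega⟩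
  set a := x0.val with hav
  set b := x1.val with hbv
  have ha : a < p := ZMod.val_lt x0
  have hb : b < p := ZMod.val_lt x1
  have hx0 : ((a : ℕ) : ZMod p) = x0 := by simp [hav, ZMod.natCast_val, ZMod.cast_id]
  have hx1 : ((b : ℕ) : ZMod p) = x1 := by simp [hbv, ZMod.natCast_val, ZMod.cast_id]
  have hneg : ((p - 1 : ℕ) : ZMod p) = -1 := by
    push_cast [Nat.cast_sub hp.one_lt.le]
    simp
  -- fmax
  have hmax : fmax ![x0, x1] = ((max a b : ℕ) : ZMod p) := by
    unfold fmax
    congr 1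
    rw [show (Finset.univ : Finset (Fin 2)) = {0, 1} by rfl]
    rw [Finset.sup_insert, Finset.sup_singleton]
    simp [hav, hbv]
  -- delta terms
  have hδ1 : 1 - (x1 + 1) ^ (p-1) = if b = p - 1 then 1 else 0 := by
    by_cases h : b = p - 1
    · rw [if_pos h]
      have hx1' : x1 = -1 := by rw [← hx1, h, hneg]
      rw [hx1', neg_add_cancel, zero_pow (by omega), sub_zero]
    · rw [if_neg h]
      have hne : x1 + 1 ≠ 0 := by
        intro hc
        have hm : x1 = -1 := by linear_combination hc
        have : b = p - 1 := by
          rw [hbv, hm, ← hneg, ZMod.val_cast_of_lt (by omega)]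
        exact h this
      rw [ZMod.pow_card_sub_one_eq_one hne, sub_self]
  have hδ0 : 1 - x0 ^ (p-1) = if a = 0 then 1 else 0 := by
    by_cases h : a = 0
    · rw [if_pos h]
      have hx0' : x0 = 0 := by rw [← hx0, h, Nat.cast_zero]
      rw [hx0', zero_pow (by omega), sub_zero]
    · rw [if_neg h]
      have hne : x0 ≠ 0 := by
        intro hc
        rw [hc, ZMod.val_zero] at hav
        exact h hav
      rw [ZMod.pow_card_sub_one_eq_one hne, sub_self]
  -- the sum
  have hterm : ∀ d ∈ Finset.Icc 2 (p-2),
      (d : ZMod p)⁻¹ * (∏ j ∈ Finset.Icc 1 d, (x0 + (j : ZMod p))) *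
        ∏ j ∈ Finset.range (p - d), (x1 - (j : ZMod p)) =
      (((-1:ℤ)^d * ((a+d).choose d : ℤ) * (b.choose (p-d) : ℤ) : ℤ) : ZMod p) := by
    intro d hd
    have hd' := Finset.mem_Icc.mp hd
    rw [← hx0, ← hx1]
    exact max2_term_eq p hp3 a b d hd'.1 hd'.2
  have hsum : (∑ d ∈ Finset.Icc 2 (p - 2),
      (d : ZMod p)⁻¹ * (∏ j ∈ Finset.Icc 1 d, (x0 + (j : ZMod p))) *
        ∏ j ∈ Finset.range (p - d), (x1 - (j : ZMod p))) =
      (if b ≤ a then (-1:ZMod p) else 0) + 1 + (if b = p-1 then ((a:ZMod p)+1) else 0)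
        - (if a = 0 then (b:ZMod p) else 0) := by
    rw [Finset.sum_congr rfl hterm]
    rw [← Int.cast_sum]
    exact max2_sum_eval p hp3 a b ha hb
  rw [hmax, hsum, hδ1, hδ0, ← hx0, ← hx1]
  -- final case analysis
  by_cases hbp : b = p - 1
  · by_cases hba : b ≤ a
    · have hab : a = p - 1 := by omega
      have ha0 : a ≠ 0 := by omega
      simp only [if_pos hbp, if_pos hba, if_neg ha0]
      rw [max_eq_left hba]
      have hca : ((a : ℕ) : ZMod p) = -1 := by rw [hab, hneg]
      have hcb : ((b : ℕ) : ZMod p) = -1 := by rw [hbp, hneg]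
      rw [hca, hcb]
      ring
    · have hcb : ((b : ℕ) : ZMod p) = -1 := by rw [hbp, hneg]
      by_cases ha0 : a = 0
      · simp only [if_pos hbp, if_neg hba, if_pos ha0]
        rw [max_eq_right (by omega : a ≤ b), ha0, Nat.cast_zero, hcb]
        ring
      · simp only [if_pos hbp, if_neg hba, if_neg ha0]
        rw [max_eq_right (by omega : a ≤ b), hcb]
        ring
  · by_cases hba : b ≤ a
    · by_cases ha0 : a = 0
      · have hb0 : b = 0 := by omega
        simp only [if_neg hbp, if_pos hba, if_pos ha0]
        rw [max_eq_left hba, ha0, hb0]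
        push_cast
        ring
      · simp only [if_neg hbp, if_pos hba, if_neg ha0]
        rw [max_eq_left hba]
        ring
    · by_cases ha0 : a = 0
      · simp only [if_neg hbp, if_neg hba, if_pos ha0]
        rw [max_eq_right (by omega : a ≤ b), ha0]
        push_cast
        ring
      · simp only [if_neg hbp, if_neg hba, if_neg ha0]
        rw [max_eq_right (by omega : a ≤ b)]
        ring
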